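/- Let P = [a, b] ⊂ ℝ with a ∈ ℤ and b ∈ ℚ ∖ ℤ. Then the solid-angle sum A_P(t) (which equals the number of integers strictly between ta and tb, plus 1/2 for each endpoint ta, tb that is an integer) is a polynomial in the positive integer t if and only if b − ⌊b⌋ = 1/2. -/
import Mathlib


/-- The solid angle (in dimension 1) of a point `x` with respect to the interval `[a,b]`:
`1` on the open interval, `1/2` at the endpoints, `0` otherwise. -/
noncomputable def intervalAngle (a b x : ℝ) : ℝ :=
  if a < x ∧ x < b then 1 else if x = a ∨ x = b then 1 / 2 else 0

/-- The solid-angle sum `A_{[a,b]}(t) = Σ_{m ∈ ℤ} ω_{[ta,tb]}(m)`. -/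
noncomputable def intervalAngleSum (a b : ℝ) (t : ℕ) : ℝ :=
  ∑' m : ℤ, intervalAngle (t * a) (t * b) (m : ℝ)

lemma angle_tsum (A : ℤ) (B : ℝ) (h : (A:ℝ) < B) :
    ∑' m : ℤ, intervalAngle (A:ℝ) B (m:ℝ)
      = ((⌊B⌋ : ℝ) - A + 1/2) - (if Int.fract B = 0 then (1/2:ℝ) else 0) := by
  have hA : A ≤ ⌊B⌋ := Int.le_floor.2 h.le
  have hsum : ∑' m : ℤ, intervalAngle (A:ℝ) B (m:ℝ)
      = ∑ m ∈ Finset.Icc A ⌊B⌋, intervalAngle (A:ℝ) B (m:ℝ) := by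
    refine tsum_eq_sum ?_
    intro m hm
    simp only [Finset.mem_Icc, not_and_or, not_le] at hm
    unfold intervalAngle
    rcases hm with hm | hm
    · have h1 : (m:ℝ) < A := by exact_mod_cast hm
      have h2 : (m:ℝ) < B := h1.trans h
      rw [if_neg, if_neg]
      · push_neg
        exact ⟨ne_of_lt h1, ne_of_lt h2⟩
      · rintro ⟨h3, -⟩; exact absurd h1 (not_lt.2 h3.le)
    · have h1 : B < m := (Int.floor_lt).1 hm
      have h2 : (A:ℝ) < m := h.trans h1
      rw [if_neg, if_neg]
      · push_neg
        exact ⟨(ne_of_lt h2).symm, (ne_of_lt h1).symm⟩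
      · rintro ⟨-, h3⟩; exact absurd h1 (not_lt.2 h3.le)
  rw [hsum]
  have hre : ∀ m ∈ Finset.Icc A ⌊B⌋, intervalAngle (A:ℝ) B (m:ℝ)
      = 1 - (if m = A then (1/2:ℝ) else 0) - (if (m:ℝ) = B then (1/2:ℝ) else 0) := by
    intro m hm
    simp only [Finset.mem_Icc] at hm
    have hmB : (m:ℝ) ≤ B := Int.le_floor.1 hm.2
    unfold intervalAngle
    rcases eq_or_lt_of_le hm.1 with hmA | hmA
    · have hmA' : (m:ℝ) = A := by exact_mod_cast hmA.symm
      rw [if_neg (by rintro ⟨h3, -⟩; rw [hmA'] at h3; exact lt_irrefl _ h3),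
        if_pos (Or.inl hmA'), if_pos hmA.symm,
        if_neg (by rw [hmA']; exact ne_of_lt h)]
      ring
    · have hmA' : (A:ℝ) < m := by exact_mod_cast hmA
      have hne : ¬ m = A := by omega
      rw [if_neg hne]
      rcases eq_or_lt_of_le hmB with hmB' | hmB'
      · rw [if_neg (by rintro ⟨-, h3⟩; rw [hmB'] at h3; exact lt_irrefl _ h3),
          if_pos (Or.inr hmB'), if_pos hmB']
        ring
      · rw [if_pos ⟨hmA', hmB'⟩, if_neg (ne_of_lt hmB')]
        ring
  rw [Finset.sum_congr rfl hre, Finset.sum_sub_distrib, Finset.sum_sub_distrib]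
  have c1 : ∑ m ∈ Finset.Icc A ⌊B⌋, (1:ℝ) = (⌊B⌋ : ℝ) - A + 1 := by
    rw [Finset.sum_const, Int.card_Icc]
    have : (0:ℤ) ≤ ⌊B⌋ + 1 - A := by omega
    rw [nsmul_eq_mul, mul_one]
    have h2 : (((⌊B⌋ + 1 - A).toNat : ℤ) : ℝ) = ((⌊B⌋ + 1 - A : ℤ) : ℝ) := by
      rw [Int.toNat_of_nonneg this]
    push_cast at h2 ⊢
    linarith
  have c2 : ∑ m ∈ Finset.Icc A ⌊B⌋, (if m = A then (1/2:ℝ) else 0) = 1/2 := by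
    rw [Finset.sum_ite_eq' (Finset.Icc A ⌊B⌋) A (fun _ => (1/2:ℝ)),
      if_pos (Finset.mem_Icc.2 ⟨le_refl A, hA⟩)]
  have c3 : ∑ m ∈ Finset.Icc A ⌊B⌋, (if (m:ℝ) = B then (1/2:ℝ) else 0)
      = if Int.fract B = 0 then (1/2:ℝ) else 0 := by
    by_cases hfr : Int.fract B = 0
    · have hBf : B = (⌊B⌋ : ℝ) := by
        have := Int.fract_add_floor B
        rw [hfr] at this; linarith
      rw [if_pos hfr]
      have : ∀ m ∈ Finset.Icc A ⌊B⌋, (if (m:ℝ) = B then (1/2:ℝ) else 0)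
          = (if m = ⌊B⌋ then (1/2:ℝ) else 0) := by
        intro m _
        congr 1
        rw [hBf]
        simp [Int.cast_inj]
      rw [Finset.sum_congr rfl this,
        Finset.sum_ite_eq' (Finset.Icc A ⌊B⌋) ⌊B⌋ (fun _ => (1/2:ℝ)),
        if_pos (Finset.mem_Icc.2 ⟨hA, le_refl _⟩)]
    · rw [if_neg hfr]
      refine Finset.sum_eq_zero fun m _ => ?_
      rw [if_neg]
      intro hmB
      apply hfr
      rw [← hmB, Int.fract_intCast]
  rw [c1, c2, c3]
  split <;> ring

lemma angleSum_formula (a : ℤ) (b : ℝ) (hab : (a:ℝ) < b) (t : ℕ) (ht : 0 < t) :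
    intervalAngleSum (a:ℝ) b t
      = (t*b - t*a + 1/2 - Int.fract ((t:ℝ)*b))
        - (if Int.fract ((t:ℝ)*b) = 0 then (1/2:ℝ) else 0) := by
  have htR : (0:ℝ) < t := by exact_mod_cast ht
  have h : ((t * a : ℤ) : ℝ) < (t:ℝ) * b := by
    push_cast
    exact mul_lt_mul_of_pos_left hab htR
  have := angle_tsum (t * a) ((t:ℝ) * b) h
  unfold intervalAngleSum
  rw [show ((t:ℝ) * (a:ℝ)) = (((t:ℕ) * a : ℤ) : ℝ) by push_cast; ring, this]
  have hfl : (⌊(t:ℝ)*b⌋ : ℝ) = (t:ℝ)*b - Int.fract ((t:ℝ)*b) := by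
    rw [Int.fract]; ring
  rw [hfl]
  push_cast
  ring

/-- For `P = [a,b]` with `a ∈ ℤ` and `b ∈ ℚ ∖ ℤ`, the solid-angle sum `A_P(t)` is a
polynomial in the positive integer `t` if and only if `b − ⌊b⌋ = 1/2`. -/
theorem intervalAngleSum_polynomial_iff (a : ℤ) (b : ℚ)
    (hb : ¬ ∃ z : ℤ, (z : ℚ) = b) (hab : (a : ℝ) < (b : ℝ)) :
    (∃ p : Polynomial ℝ, ∀ t : ℕ, 0 < t →
        intervalAngleSum (a : ℝ) (b : ℝ) t = p.eval (t : ℝ)) ↔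
      Int.fract (b : ℝ) = 1 / 2 := by
  set β : ℝ := (b : ℝ) with hβ
  have hne : Int.fract β ≠ 0 := by
    intro h0
    apply hb
    refine ⟨⌊β⌋, ?_⟩
    have h1 : (⌊β⌋ : ℝ) = β := by
      have := Int.fract_add_floor β
      rw [h0] at this; linarith
    have : ((⌊β⌋ : ℚ) : ℝ) = (b : ℝ) := by push_cast; exact h1
    exact_mod_cast this
  constructor
  · rintro ⟨p, hp⟩
    set q : ℕ := b.den with hq
    have hq0 : 0 < q := b.pos
    have hqb : (q : ℝ) * β = (b.num : ℝ) := by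
      show (b.den : ℝ) * (b : ℝ) = (b.num : ℝ)
      exact_mod_cast congrArg (fun x : ℚ => (x : ℝ)) (Rat.den_mul_eq_num b)
    have hroot : ∀ k : ℕ, (p - Polynomial.C (β - (a:ℝ)) * Polynomial.X).IsRoot
        ((((k+1)*q : ℕ)) : ℝ) := by
      intro k
      have ht : 0 < (k+1)*q := Nat.mul_pos (Nat.succ_pos k) hq0
      have hfr : Int.fract ((((k+1)*q : ℕ):ℝ) * β) = 0 := by
        have : ((((k+1)*q : ℕ):ℝ)) * β = (((k+1 : ℤ) * b.num : ℤ) : ℝ) := by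
          push_cast
          rw [mul_assoc, hqb]
        rw [this, Int.fract_intCast]
      have := angleSum_formula a β hab ((k+1)*q) ht
      rw [hfr, if_pos rfl, hp _ ht] at this
      simp only [Polynomial.IsRoot, Polynomial.eval_sub, Polynomial.eval_mul,
        Polynomial.eval_C, Polynomial.eval_X]
      rw [this]
      ring
    have hr0 : p - Polynomial.C (β - (a:ℝ)) * Polynomial.X = 0 := by
      by_contra hr
      have hfin := Polynomial.finite_setOf_isRoot hr
      have hinj : Function.Injective (fun k : ℕ => ((((k+1)*q : ℕ)) : ℝ)) := by
        intro k1 k2 h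
        have h' : (k1+1)*q = (k2+1)*q := Nat.cast_injective h
        have := Nat.eq_of_mul_eq_mul_right hq0 h'
        omega
      exact (Set.infinite_of_injective_forall_mem hinj hroot) hfin
    have hpe : ∀ x : ℝ, p.eval x = (β - (a:ℝ)) * x := by
      intro x
      have hp' : p = Polynomial.C (β - (a:ℝ)) * Polynomial.X := by
        have := sub_eq_zero.mp hr0
        exact this
      rw [hp']
      simp [Polynomial.eval_mul]
    have ht0 : 0 < q + 1 := Nat.succ_pos q
    have hfr : Int.fract (((q+1 : ℕ):ℝ) * β) = Int.fract β := by
      have : ((q+1 : ℕ):ℝ) * β = ((b.num : ℤ) : ℝ) + β := by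
        push_cast
        rw [add_mul, one_mul, hqb]
      rw [this, Int.fract_intCast_add]
    have hform := angleSum_formula a β hab (q+1) ht0
    rw [hfr, if_neg hne, hp _ ht0, hpe] at hform
    have hexp : (β - (a:ℝ)) * ((q+1 : ℕ):ℝ)
        = ((q+1:ℕ):ℝ) * β - ((q+1:ℕ):ℝ) * (a:ℝ) := by ring
    rw [hexp] at hform
    linarith
  · intro hf
    refine ⟨Polynomial.C (β - (a:ℝ)) * Polynomial.X, fun t ht => ?_⟩
    have hb2 : β = (⌊β⌋ : ℝ) + 1/2 := by
      have := Int.fract_add_floor β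
      rw [hf] at this; linarith
    have hfr : Int.fract ((t:ℝ) * β) = Int.fract ((t:ℝ)/2) := by
      have h1 : (t:ℝ) * β = ((t * ⌊β⌋ : ℤ) : ℝ) + (t:ℝ)/2 := by
        conv_lhs => rw [hb2]
        push_cast; ring
      rw [h1, Int.fract_intCast_add]
    have hform := angleSum_formula a β hab t ht
    have heval : (Polynomial.C (β - (a:ℝ)) * Polynomial.X).eval (t:ℝ)
        = (β - (a:ℝ)) * (t:ℝ) := by simp [Polynomial.eval_mul]
    rw [heval]
    rcases Nat.even_or_odd t with ⟨k, hk⟩ | ⟨k, hk⟩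
    · have h2 : Int.fract ((t:ℝ)/2) = 0 := by
        have : (t:ℝ)/2 = ((k : ℤ) : ℝ) := by subst hk; push_cast; ring
        rw [this, Int.fract_intCast]
      rw [hform, hfr, h2, if_pos rfl]
      ring
    · have h2 : Int.fract ((t:ℝ)/2) = 1/2 := by
        have h3 : (t:ℝ)/2 = ((k : ℤ) : ℝ) + 1/2 := by subst hk; push_cast; ring
        rw [h3, Int.fract_intCast_add, Int.fract_eq_self.2 (by norm_num)]
      rw [hform, hfr, h2, if_neg (by norm_num)]
      ring
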